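/- arXiv:2009.10188 — 3 statements merged into one kernel-verified Lean document; each statement's English description precedes it below -/
import Mathlib

section
/- Let k be a field, A a finite-dimensional k-algebra, and P a faithful projective-injective finitely generated left A-module. If (A, P) is a cover of End_A(P)^op, then A is a Morita algebra. -/
universe u

open MulOpposite

set_option synthInstance.maxHeartbeats 400000
set_option maxHeartbeats 1000000

/-- `X ∈ add M`: `X` is a direct summand of a finite direct sum of copies of `M`.
`add M = add N` is rendered as the conjunction of `MemAdd R M N` and `MemAdd R N M`. -/
def MemAdd (R : Type u) [Ring R] (M : Type u) [AddCommGroup M] [Module R M]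
    (X : Type u) [AddCommGroup X] [Module R X] : Prop :=
  ∃ (n : ℕ) (i : X →ₗ[R] (Fin n → M)) (p : (Fin n → M) →ₗ[R] X),
    p ∘ₗ i = LinearMap.id

/-- `(A, P)` is a cover of `B = End_A(P)ᵒᵖ`: the Schur functor `Hom_A(P, -)` is fully
faithful on finitely generated projective `A`-modules.  Here a map
`Φ : Hom_A(P, M) → Hom_A(P, N)` is `B`-linear iff it is additive and commutes with
precomposition by every `A`-endomorphism of `P`, so the condition says that for all
finitely generated projective `M`, `N` the natural map
`Hom_A(M, N) → Hom_B(Hom_A(P, M), Hom_A(P, N))`, `g ↦ (f ↦ g ∘ f)`, is bijective. -/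
def IsCover (A : Type u) [Ring A] (P : Type u) [AddCommGroup P] [Module A P] : Prop :=
  ∀ (M N : Type u) [AddCommGroup M] [Module A M] [AddCommGroup N] [Module A N],
    Module.Finite A M → Module.Projective A M →
    Module.Finite A N → Module.Projective A N →
    (Function.Injective fun (g : M →ₗ[A] N) => fun f : P →ₗ[A] M => g ∘ₗ f) ∧
    (∀ Φ : (P →ₗ[A] M) → (P →ₗ[A] N),
      (∀ f₁ f₂, Φ (f₁ + f₂) = Φ f₁ + Φ f₂) →
      (∀ (f : P →ₗ[A] M) (g : P →ₗ[A] P), Φ (f ∘ₗ g) = Φ f ∘ₗ g) →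
      ∃ g : M →ₗ[A] N, ∀ f, Φ f = g ∘ₗ f)

/-- `M` is a generator over `R`: `R` is a direct summand of a finite direct sum of
copies of `M`. -/
def IsGenerator (R : Type u) [Ring R] (M : Type u) [AddCommGroup M] [Module R M] : Prop :=
  MemAdd R M R

/-- `A` is a Morita algebra over `k`: `A ≅ End_B(M)ᵒᵖ` as `k`-algebras, for some
self-injective finite-dimensional `k`-algebra `B` and some finitely generated
generator `M` over `B`. -/
def IsMoritaAlgebra (k A : Type u) [Field k] [Ring A] [Algebra k A] : Prop :=
  ∃ (B : Type u) (_ : Ring B) (_ : Algebra k B) (M : Type u)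
    (_ : AddCommGroup M) (_ : Module B M) (_ : Module k M)
    (_ : IsScalarTower k B M),
    FiniteDimensional k B ∧ Module.Injective B B ∧
    Module.Finite B M ∧ IsGenerator B M ∧
    Nonempty (A ≃ₐ[k] (Module.End B M)ᵐᵒᵖ)

/-- The action of `End_A(P)ᵒᵖ` on `Hom_A(P, N)` by precomposition. -/
def precompModule (A P : Type u) [Ring A] [AddCommGroup P] [Module A P]
    (N : Type u) [AddCommGroup N] [Module A N] :
    Module (Module.End A P)ᵐᵒᵖ (P →ₗ[A] N) where
  smul b f := f ∘ₗ b.unop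
  one_smul _ := LinearMap.ext fun _ => rfl
  mul_smul _ _ _ := LinearMap.ext fun _ => rfl
  smul_zero _ := LinearMap.ext fun _ => rfl
  smul_add _ _ _ := LinearMap.ext fun _ => rfl
  add_smul _ _ f := LinearMap.ext fun _ => f.map_add _ _
  zero_smul f := LinearMap.ext fun _ => f.map_zero

/-- If `P` is a faithful projective-injective finitely generated left `A`-module and
`(A, P)` is a cover of `End_A(P)ᵒᵖ`, then `A` is a Morita algebra. -/
theorem isMoritaAlgebra_of_isCover
    (k A P : Type u) [Field k] [Ring A] [Algebra k A] [FiniteDimensional k A]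
    [AddCommGroup P] [Module A P] [Module.Finite A P]
    (hfaithful : ∀ a : A, (∀ p : P, a • p = 0) → a = 0)
    (hproj : Module.Projective A P) (hinj : Module.Injective A P)
    (hcover : IsCover A P) :
    IsMoritaAlgebra k A := by
  classical
  haveI := hproj
  -- `k`-module structure on `P` and compatibilities
  letI instkP : Module k P := Module.compHom P (algebraMap k A)
  haveI instTower : IsScalarTower k A P :=
    ⟨fun x y z => by rw [Algebra.smul_def, mul_smul]; rfl⟩
  haveI instComm : SMulCommClass A k P :=
    ⟨fun a c p => by
      show a • (algebraMap k A c • p) = algebraMap k A c • (a • p)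
      rw [← mul_smul, ← mul_smul, Algebra.commutes]⟩
  haveI instFinkP : Module.Finite k P := Module.Finite.trans A P
  -- algebra and finiteness structure on `B = End_A(P)ᵒᵖ`
  letI instAlgB : Algebra k (Module.End A P)ᵐᵒᵖ := inferInstance
  haveI instFinB : FiniteDimensional k (Module.End A P)ᵐᵒᵖ :=
    Module.Finite.equiv (MulOpposite.opLinearEquiv k :
      Module.End A P ≃ₗ[k] (Module.End A P)ᵐᵒᵖ)
  -- the `B`-module `M = Hom_A(P, A)`
  letI instBM : Module (Module.End A P)ᵐᵒᵖ (P →ₗ[A] A) := precompModule A P A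
  haveI instCommBkM : SMulCommClass (Module.End A P)ᵐᵒᵖ k (P →ₗ[A] A) :=
    ⟨fun _ _ _ => LinearMap.ext fun _ => rfl⟩
  haveI instTowerkBM : IsScalarTower k (Module.End A P)ᵐᵒᵖ (P →ₗ[A] A) :=
    ⟨fun c b f => LinearMap.ext fun q => f.map_smul_of_tower c (b.unop q)⟩
  haveI instFinkM : FiniteDimensional k (P →ₗ[A] A) := inferInstance
  -- `M` is finitely generated over `B`
  haveI instFinBM : Module.Finite (Module.End A P)ᵐᵒᵖ (P →ₗ[A] A) := by
    obtain ⟨S, hS⟩ := (instFinkM : Module.Finite k (P →ₗ[A] A)).fg_top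
    refine ⟨⟨S, eq_top_iff.mpr ?_⟩⟩
    intro m hmT
    clear hmT
    have hm : m ∈ Submodule.span k (S : Set (P →ₗ[A] A)) := by rw [hS]; trivial
    induction hm using Submodule.span_induction with
    | mem x hx => exact Submodule.subset_span hx
    | zero => exact Submodule.zero_mem _
    | add x y _ _ hx hy => exact Submodule.add_mem _ hx hy
    | smul c f _ hf =>
        have hsm : c • f = (op ((algebraMap k (Module.End A P)) c)) • f := by
          apply LinearMap.ext; intro q
          show c • f q = f ((algebraMap k (Module.End A P) c) q)
          rw [Module.algebraMap_end_apply, LinearMap.map_smul_of_tower]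
        rw [hsm]
        exact Submodule.smul_mem _ _ hf
  -- cover data
  have coverAP := hcover A P inferInstance inferInstance inferInstance hproj
  have coverAA := hcover A A inferInstance inferInstance inferInstance inferInstance
  -- `B` is self-injective, via Baer's criterion
  have hBaer : Module.Baer (Module.End A P)ᵐᵒᵖ (Module.End A P)ᵐᵒᵖ := by
    intro I φ
    set Xh : (↥I →₀ P) →ₗ[A] P :=
      Finsupp.lsum ℕ (fun x : ↥I => ((x : (Module.End A P)ᵐᵒᵖ).unop)) with hXh
    set Yh : (↥I →₀ P) →ₗ[A] P :=
      Finsupp.lsum ℕ (fun x : ↥I => ((φ x).unop)) with hYh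
    have hXsum : ∀ w : ↥I →₀ P,
        (∑ x ∈ w.support, ((x : (Module.End A P)ᵐᵒᵖ).unop) (w x)) = Xh w := fun w => by
      rw [hXh, Finsupp.lsum_apply]; rfl
    have hYsum : ∀ w : ↥I →₀ P,
        (∑ x ∈ w.support, ((φ x).unop) (w x)) = Yh w := fun w => by
      rw [hYh, Finsupp.lsum_apply]; rfl
    have key : ∀ v : ↥I →₀ P, Xh v = 0 → Yh v = 0 := by
      intro v hv
      have h1 : ∀ f : P →ₗ[A] A,
          (LinearMap.toSpanSingleton A P (Yh v)) ∘ₗ f = (0 : A →ₗ[A] P) ∘ₗ f := by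
        intro f
        set t : ↥I → Module.End A P :=
          fun x => (LinearMap.toSpanSingleton A P (v x)) ∘ₗ f with ht
        have htq : ∀ (x : ↥I) (q : P), (t x) q = f q • v x := fun x q => by
          rw [ht]; simp [LinearMap.toSpanSingleton_apply]
        have hE : (∑ x ∈ v.support, ((x : (Module.End A P)ᵐᵒᵖ).unop ∘ₗ t x))
            = (0 : Module.End A P) := by
          apply LinearMap.ext; intro q
          simp only [LinearMap.sum_apply, LinearMap.comp_apply, LinearMap.zero_apply]
          calc ∑ x ∈ v.support, (x : (Module.End A P)ᵐᵒᵖ).unop ((t x) q)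
              = ∑ x ∈ v.support, f q • (x : (Module.End A P)ᵐᵒᵖ).unop (v x) :=
                Finset.sum_congr rfl fun x _ => by rw [htq x q, map_smul]
            _ = f q • ∑ x ∈ v.support, (x : (Module.End A P)ᵐᵒᵖ).unop (v x) :=
                (Finset.smul_sum).symm
            _ = f q • Xh v := by rw [hXsum v]
            _ = 0 := by rw [hv, smul_zero]
        have hw : (∑ x ∈ v.support, (op (t x) • x : ↥I)) = 0 := by
          have hval : ((∑ x ∈ v.support, (op (t x) • x : ↥I) : ↥I) : (Module.End A P)ᵐᵒᵖ)
              = op (∑ x ∈ v.support, ((x : (Module.End A P)ᵐᵒᵖ).unop ∘ₗ t x)) := by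
            rw [Finset.op_sum]
            exact map_sum I.subtype _ _
          exact Subtype.ext (by rw [hval, hE]; rfl)
        have hφ0 : (∑ x ∈ v.support, op (t x) • φ x) = 0 := by
          have h2 := congrArg φ hw
          rw [map_sum, map_zero] at h2
          simpa only [map_smul] using h2
        have hφE : (∑ x ∈ v.support, ((φ x).unop ∘ₗ t x)) = (0 : Module.End A P) := by
          have h3 := congrArg unop hφ0
          rw [Finset.unop_sum] at h3
          calc (∑ x ∈ v.support, ((φ x).unop ∘ₗ t x))
              = ∑ x ∈ v.support, unop (op (t x) • φ x) := Finset.sum_congr rfl fun x _ => rfl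
            _ = 0 := h3
        apply LinearMap.ext; intro q
        have h5 := LinearMap.congr_fun hφE q
        simp only [LinearMap.sum_apply, LinearMap.comp_apply, LinearMap.zero_apply] at h5
        have h6 : ∀ x ∈ v.support, (φ x).unop ((t x) q) = f q • (φ x).unop (v x) :=
          fun x _ => by rw [htq x q, map_smul]
        rw [Finset.sum_congr rfl h6, ← Finset.smul_sum, hYsum v] at h5
        simpa [LinearMap.toSpanSingleton_apply] using h5
      have h7 : LinearMap.toSpanSingleton A P (Yh v) = 0 := coverAP.1 (funext h1)
      have h8 := LinearMap.congr_fun h7 1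
      simpa [LinearMap.toSpanSingleton_apply] using h8
    have hker : LinearMap.ker Xh ≤ LinearMap.ker Yh := fun v hv => by
      rw [LinearMap.mem_ker] at *
      exact key v hv
    obtain ⟨c, hc⟩ := hinj.out ((LinearMap.range Xh).subtype)
      (Submodule.injective_subtype _)
      ((Submodule.liftQ (LinearMap.ker Xh) Yh hker) ∘ₗ
        (Xh.quotKerEquivRange.symm : ↥(LinearMap.range Xh) →ₗ[A] _))
    have hcX : ∀ v : ↥I →₀ P, c (Xh v) = Yh v := by
      intro v
      have hmem : Xh v ∈ LinearMap.range Xh := LinearMap.mem_range_self _ v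
      have h3 : Xh.quotKerEquivRange.symm ⟨Xh v, hmem⟩ = Submodule.Quotient.mk v := by
        rw [LinearEquiv.symm_apply_eq]
        exact Subtype.ext (Xh.quotKerEquivRange_apply_mk v).symm
      calc c (Xh v) = ((Submodule.liftQ (LinearMap.ker Xh) Yh hker) ∘ₗ
            (Xh.quotKerEquivRange.symm : ↥(LinearMap.range Xh) →ₗ[A] _)) ⟨Xh v, hmem⟩ :=
          hc ⟨Xh v, hmem⟩
        _ = (Submodule.liftQ (LinearMap.ker Xh) Yh hker)
              (Xh.quotKerEquivRange.symm ⟨Xh v, hmem⟩) := rfl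
        _ = (Submodule.liftQ (LinearMap.ker Xh) Yh hker) (Submodule.Quotient.mk v) := by
              rw [h3]
        _ = Yh v := Submodule.liftQ_apply _ _ _
    refine ⟨LinearMap.toSpanSingleton _ _ (op c), ?_⟩
    intro x hx
    have hcomp : c ∘ₗ x.unop = (φ ⟨x, hx⟩).unop := by
      apply LinearMap.ext; intro q
      have h9 := hcX (Finsupp.single ⟨x, hx⟩ q)
      rw [hXh, hYh] at h9
      simp only [Finsupp.lsum_single] at h9
      exact h9
    calc LinearMap.toSpanSingleton (Module.End A P)ᵐᵒᵖ (Module.End A P)ᵐᵒᵖ (op c) x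
        = x • (op c) := LinearMap.toSpanSingleton_apply _ _ _ _
      _ = x * op c := rfl
      _ = op (c * x.unop) := by rw [op_mul, op_unop]
      _ = op ((φ ⟨x, hx⟩).unop) := by rw [Module.End.mul_eq_comp, hcomp]
      _ = φ ⟨x, hx⟩ := op_unop _
  haveI instInjB : Module.Injective (Module.End A P)ᵐᵒᵖ (Module.End A P)ᵐᵒᵖ :=
    hBaer.injective
  -- `M` is a generator over `B`
  have hgen : IsGenerator (Module.End A P)ᵐᵒᵖ (P →ₗ[A] A) := by
    obtain ⟨n, π, hπ⟩ := Module.Finite.exists_fin' A P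
    obtain ⟨s, hs⟩ := Module.projective_lifting_property π LinearMap.id hπ
    refine ⟨n,
      { toFun := fun b j => (LinearMap.proj j) ∘ₗ (s ∘ₗ b.unop)
        map_add' := fun b c => by
          funext j
          apply LinearMap.ext; intro q
          show (LinearMap.proj j : (Fin n → A) →ₗ[A] A) (s ((b + c).unop q)) = _
          simp only [MulOpposite.unop_add, LinearMap.add_apply, map_add]
          rfl
        map_smul' := fun b' b => by
          funext j
          apply LinearMap.ext; intro q
          rfl },
      { toFun := fun F => op (π ∘ₗ LinearMap.pi F)
        map_add' := fun F G => unop_injective <| LinearMap.ext fun q => by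
          show π (LinearMap.pi (F + G) q) = π (LinearMap.pi F q) + π (LinearMap.pi G q)
          rw [← map_add]
          rfl
        map_smul' := fun b F => unop_injective <| LinearMap.ext fun q => rfl },
      ?_⟩
    apply LinearMap.ext; intro b
    apply unop_injective
    apply LinearMap.ext; intro q
    show π (s (b.unop q)) = b.unop q
    exact LinearMap.congr_fun hs (b.unop q)
  -- the algebra isomorphism `A ≅ End_B(M)ᵒᵖ`
  let Φ : A → Module.End (Module.End A P)ᵐᵒᵖ (P →ₗ[A] A) := fun a =>
    { toFun := fun f => LinearMap.toSpanSingleton A A a ∘ₗ f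
      map_add' := fun f g => by
        apply LinearMap.ext; intro q
        show (LinearMap.toSpanSingleton A A a) ((f + g) q) = _
        simp only [LinearMap.add_apply, map_add]
        rfl
      map_smul' := fun b f => by
        apply LinearMap.ext; intro q
        rfl }
  let Θ : A →ₐ[k] (Module.End (Module.End A P)ᵐᵒᵖ (P →ₗ[A] A))ᵐᵒᵖ :=
    { toFun := fun a => op (Φ a)
      map_one' := by
        show op (Φ 1) = op 1
        refine congrArg op ?_
        apply LinearMap.ext; intro f
        apply LinearMap.ext; intro q
        show f q • (1 : A) = f q
        rw [smul_eq_mul, mul_one]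
      map_mul' := fun a a' => by
        show op (Φ (a * a')) = op (Φ a) * op (Φ a')
        have hm : Φ (a * a') = Φ a' * Φ a := by
          apply LinearMap.ext; intro f
          apply LinearMap.ext; intro q
          show f q • (a * a') = (f q • a) • a'
          rw [smul_eq_mul, smul_eq_mul, smul_eq_mul, mul_assoc]
        rw [hm]
        rfl
      map_zero' := by
        show op (Φ 0) = op 0
        refine congrArg op ?_
        apply LinearMap.ext; intro f
        apply LinearMap.ext; intro q
        show f q • (0 : A) = (0 : A)
        rw [smul_zero]
      map_add' := fun a a' => by
        show op (Φ (a + a')) = op (Φ a + Φ a')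
        refine congrArg op ?_
        apply LinearMap.ext; intro f
        apply LinearMap.ext; intro q
        show f q • (a + a') = f q • a + f q • a'
        rw [smul_add]
      commutes' := fun cc => by
        show op (Φ (algebraMap k A cc)) =
          algebraMap k (Module.End (Module.End A P)ᵐᵒᵖ (P →ₗ[A] A))ᵐᵒᵖ cc
        refine congrArg op ?_
        apply LinearMap.ext; intro f
        apply LinearMap.ext; intro q
        show f q • (algebraMap k A cc) = cc • f q
        rw [smul_eq_mul, Algebra.smul_def]
        exact (Algebra.commutes cc (f q)).symm }
  have hinjΘ : Function.Injective Θ := by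
    intro a a' h
    have h2 : Φ a = Φ a' := congrArg unop h
    have h3 : (fun f : P →ₗ[A] A => LinearMap.toSpanSingleton A A a ∘ₗ f)
        = fun f => LinearMap.toSpanSingleton A A a' ∘ₗ f :=
      funext fun f => LinearMap.congr_fun h2 f
    have h4 := coverAA.1 h3
    simpa [LinearMap.toSpanSingleton_apply] using LinearMap.congr_fun h4 1
  have hsurjΘ : Function.Surjective Θ := by
    intro Ψ'
    obtain ⟨g0, hg0⟩ := coverAA.2 (fun f => Ψ'.unop f)
      (fun f₁ f₂ => map_add Ψ'.unop f₁ f₂)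
      (fun f g => Ψ'.unop.map_smul (op g) f)
    refine ⟨g0 1, ?_⟩
    have hρ : LinearMap.toSpanSingleton A A (g0 1) = g0 := by
      apply LinearMap.ext; intro x
      rw [LinearMap.toSpanSingleton_apply, ← map_smul, smul_eq_mul, mul_one]
    have hΦ : Φ (g0 1) = Ψ'.unop := by
      apply LinearMap.ext; intro f
      show LinearMap.toSpanSingleton A A (g0 1) ∘ₗ f = Ψ'.unop f
      rw [hρ]
      exact (hg0 f).symm
    show op (Φ (g0 1)) = Ψ'
    rw [hΦ, op_unop]
  refine ⟨(Module.End A P)ᵐᵒᵖ, inferInstance, instAlgB, (P →ₗ[A] A), inferInstance,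
    instBM, inferInstance, ?_, ?_, ?_, ?_, ?_, ?_⟩
  · with_unfolding_all exact instTowerkBM
  · with_unfolding_all exact instFinB
  · exact instInjB
  · exact instFinBM
  · exact hgen
  · exact ⟨AlgEquiv.ofBijective Θ ⟨hinjΘ, hsurjΘ⟩⟩
end

section
/- Let k be a field, A a finite-dimensional QF-1 k-algebra, and P a faithful projective-injective finitely generated left A-module. Then A is self-injective if and only if Hom_A(P, A) is a faithful right A-module (where the right A-action is by postmultiplication). -/
universe u

open MulOpposite

set_option synthInstance.maxHeartbeats 400000
set_option maxHeartbeats 1000000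

/-- The canonical ring homomorphism from `A` to `End_B(M)`, where `B = End_A(M)ᵒᵖ` acts
on `M` by evaluation (so that `B`-linear endomorphisms of `M` are exactly the additive
endomorphisms of `M` commuting with every `A`-linear endomorphism of `M`); it sends `a`
to the `B`-endomorphism `m ↦ a • m`.  It is bijective exactly when the canonical algebra
map `A → End_B(M)` is an isomorphism, i.e. when the double centralizer property holds. -/
noncomputable def toDoubleCentralizer (A : Type u) [Ring A] (M : Type u) [AddCommGroup M]
    [Module A M] : A →+* Module.End (Module.End A M) M where
  toFun a :=
    { toFun := fun m => a • m
      map_add' := fun m n => smul_add a m n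
      map_smul' := fun g m => (g.map_smul a m).symm }
  map_one' := LinearMap.ext fun m => one_smul A m
  map_mul' a b := LinearMap.ext fun m => mul_smul a b m
  map_zero' := LinearMap.ext fun m => zero_smul A m
  map_add' a b := LinearMap.ext fun m => add_smul a b m

/-- `A` is a QF-1 algebra: every faithful finitely generated left `A`-module has the
double centralizer property. -/
def IsQF1 (A : Type u) [Ring A] : Prop :=
  ∀ (M : Type u) [AddCommGroup M] [Module A M], Module.Finite A M →
    (∀ a : A, (∀ m : M, a • m = 0) → a = 0) →
    Function.Bijective (toDoubleCentralizer A M)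

section Aux

variable {A P : Type u} [Ring A] [AddCommGroup P] [Module A P]

/-- If `1 = ∑ Fᵢ(Qᵢ)` for a finite family `Fᵢ : P →ₗ[A] A`, `Qᵢ : P`, and `P` is injective,
then `A` is self-injective: extend each coordinate map along the given injection. -/
theorem aux_selfinj (hinj : Module.Injective A P) (ι : Type u) [Fintype ι]
    (F : ι → (P →ₗ[A] A)) (Q : ι → P) (hone : ∑ i, F i (Q i) = 1) :
    Module.Injective A A := by
  constructor
  intro X Y _ _ _ _ f hf g
  have key : ∀ i : ι, ∃ h : Y →ₗ[A] P, ∀ x, h (f x) = g x • Q i := fun i =>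
    hinj.out f hf
      { toFun := fun x => g x • Q i
        map_add' := fun x y => by simp [add_smul]
        map_smul' := fun a x => by simp [smul_eq_mul, mul_smul] }
  choose G hG using key
  refine ⟨∑ i, (F i).comp (G i), fun x => ?_⟩
  have : ∀ i : ι, F i (G i (f x)) = g x * F i (Q i) := fun i => by
    rw [hG i x, map_smul, smul_eq_mul]
  simp only [LinearMap.coe_sum, LinearMap.coe_comp, Finset.sum_apply, Function.comp_apply]
  rw [Finset.sum_congr rfl fun i _ => this i, ← Finset.mul_sum, hone, mul_one]

/-- Finite dual basis for a finitely generated projective module. -/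
theorem aux_dual_basis (hproj : Module.Projective A P) [Module.Finite A P] :
    ∃ (n : ℕ) (α : Fin n → (P →ₗ[A] A)) (q : Fin n → P),
      ∀ p : P, ∑ i, α i p • q i = p := by
  obtain ⟨n, π, hπ⟩ := Module.Finite.exists_fin' A P
  haveI := hproj
  obtain ⟨s, hs⟩ := Module.projective_lifting_property π LinearMap.id hπ
  refine ⟨n, fun i => (LinearMap.proj i).comp s, fun i => π (Pi.single i 1), fun p => ?_⟩
  have h1 : ∀ i : Fin n, ((LinearMap.proj i).comp s) p • π (Pi.single i 1)
      = π (Pi.single i (s p i)) := by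
    intro i
    rw [← map_smul]
    congr 1
    ext j
    rcases eq_or_ne j i with rfl | hj
    · simp
    · simp [Pi.single_eq_of_ne hj]
  rw [Finset.sum_congr rfl fun i _ => h1 i, ← map_sum]
  have h2 : (∑ i, Pi.single i (s p i)) = s p := Finset.univ_sum_single (s p)
  rw [h2]
  exact congrFun (congrArg (fun f => f.toFun) hs) p

end Aux

/-- Let `A` be a finite-dimensional QF-1 `k`-algebra and `P` a faithful
projective-injective finitely generated left `A`-module.  Then `A` is self-injective
iff `Hom_A(P, A)` (with right `A`-action by postmultiplication) is a faithful right
`A`-module. -/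
theorem qf1_selfinjective_iff
    (k A P : Type u) [Field k] [Ring A] [Algebra k A] [FiniteDimensional k A]
    [AddCommGroup P] [Module A P] [Module.Finite A P]
    (hqf1 : IsQF1 A)
    (hfaithful : ∀ a : A, (∀ p : P, a • p = 0) → a = 0)
    (hproj : Module.Projective A P) (hinj : Module.Injective A P) :
    Module.Injective A A ↔
      (∀ a : A, (∀ (f : P →ₗ[A] A) (p : P), f p * a = 0) → a = 0) := by
  constructor
  · -- A self-injective ⇒ Hom(P, A) is a faithful right A-module
    intro hAinj
    letI : Module k P := Module.compHom P (algebraMap k A)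
    haveI : IsScalarTower k A P := ⟨fun c a p => by
      show (c • a) • p = (algebraMap k A c) • (a • p)
      rw [Algebra.smul_def, mul_smul]⟩
    haveI : Module.Finite k P := Module.Finite.trans A P
    obtain ⟨n, v, hv⟩ := Module.Finite.exists_fin (R := k) (M := P)
    -- the embedding A → (Fin n → P)
    set ι : A →ₗ[A] (Fin n → P) :=
      { toFun := fun a => fun i => a • v i
        map_add' := fun a b => by ext i; simp [add_smul]
        map_smul' := fun a b => by ext i; simp [smul_eq_mul, mul_smul] } with hι
    have hιinj : Function.Injective ι := by
      rw [← LinearMap.ker_eq_bot, LinearMap.ker_eq_bot']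
      intro a ha
      apply hfaithful
      intro p
      have hp : p ∈ Submodule.span k (Set.range v) := hv ▸ Submodule.mem_top
      induction hp using Submodule.span_induction with
      | mem x hx =>
        obtain ⟨i, rfl⟩ := hx
        exact congrFun ha i
      | zero => exact smul_zero a
      | add x y _ _ hx hy => rw [smul_add, hx, hy, add_zero]
      | smul c x _ hx =>
        rw [← algebraMap_smul A c x, smul_smul, ← Algebra.commutes, ← smul_smul, hx, smul_zero]
    obtain ⟨h, hh⟩ := hAinj.out ι hιinj LinearMap.id
    have hone : ∑ i, (h.comp (LinearMap.single A (fun _ => P) i)) (v i) = 1 := by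
      simp only [LinearMap.coe_comp, Function.comp_apply]
      rw [← map_sum]
      have : (∑ i, (LinearMap.single A (fun _ => P) i) (v i)) = ι 1 := by
        ext j
        rw [hι]
        simp [Finset.univ_sum_single (fun i => v i)]
      rw [this, hh 1]
      rfl
    intro a ha
    calc a = 1 * a := (one_mul a).symm
      _ = (∑ i, (h.comp (LinearMap.single A (fun _ => P) i)) (v i)) * a := by rw [hone]
      _ = ∑ i, (h.comp (LinearMap.single A (fun _ => P) i)) (v i) * a := Finset.sum_mul ..
      _ = 0 := by
        rw [Finset.sum_congr rfl fun i _ =>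
          ha (h.comp (LinearMap.single A (fun _ => P) i)) (v i)]
        simp
  · -- Hom(P, A) faithful ⇒ A self-injective
    intro hR
    obtain ⟨n, α, q, hdb⟩ := aux_dual_basis hproj
    set S : Set A := {x | ∃ (f : P →ₗ[A] A) (p : P), f p = x} with hS
    set T : Submodule A A := Submodule.span A S with hT
    have hSsub : S ⊆ (T : Set A) := Submodule.subset_span
    -- `T` is closed under right multiplication
    have hTr : ∀ t ∈ T, ∀ a : A, t * a ∈ T := by
      intro t ht a
      induction ht using Submodule.span_induction with
      | mem x hx =>
        obtain ⟨f, p, rfl⟩ := hx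
        exact hSsub ⟨{ toFun := fun r => f r * a
                       map_add' := fun r s => by simp [add_mul]
                       map_smul' := fun c r => by simp [smul_eq_mul, mul_assoc] }, p, rfl⟩
      | zero => rw [zero_mul]; exact T.zero_mem
      | add x y _ _ hx hy => rw [add_mul]; exact T.add_mem hx hy
      | smul c x _ hx => rw [smul_eq_mul, mul_assoc, ← smul_eq_mul]; exact T.smul_mem c hx
    -- `T` annihilates `A ⧸ T`
    have hTkill : ∀ t ∈ T, ∀ x : A ⧸ T, t • x = 0 := by
      intro t ht x
      obtain ⟨b, rfl⟩ := Submodule.mkQ_surjective T x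
      show t • Submodule.Quotient.mk b = 0
      rw [← Submodule.Quotient.mk_smul, Submodule.Quotient.mk_eq_zero, smul_eq_mul]
      exact hTr t ht b
    haveI : Module.Finite A (A ⧸ T) :=
      Module.Finite.of_surjective T.mkQ (Submodule.mkQ_surjective T)
    set M := P × (A ⧸ T) with hM
    have hMfaith : ∀ a : A, (∀ m : M, a • m = 0) → a = 0 := by
      intro a h
      refine hfaithful a fun p => ?_
      have := h (p, 0)
      rw [Prod.smul_mk, Prod.mk_eq_zero] at this
      exact this.1
    -- components of endomorphisms of M vanish off the diagonal
    have hg21 : ∀ (g : M →ₗ[A] M) (p : P), (g (p, 0)).2 = 0 := by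
      intro g p
      set ψ : P →ₗ[A] (A ⧸ T) :=
        (LinearMap.snd A P (A ⧸ T)).comp (g.comp (LinearMap.inl A P (A ⧸ T))) with hψ
      show ψ p = 0
      rw [← hdb p, map_sum]
      refine Finset.sum_eq_zero fun i _ => ?_
      rw [map_smul]
      exact hTkill _ (hSsub ⟨α i, p, rfl⟩) _
    have hg12 : ∀ (g : M →ₗ[A] M) (x : A ⧸ T), (g (0, x)).1 = 0 := by
      intro g x
      set χ : (A ⧸ T) →ₗ[A] P :=
        (LinearMap.fst A P (A ⧸ T)).comp (g.comp (LinearMap.inr A P (A ⧸ T))) with hχ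
      set p0 : P := χ (Submodule.Quotient.mk 1) with hp0
      have hTp0 : ∀ t ∈ T, t • p0 = 0 := by
        intro t ht
        rw [hp0, ← map_smul, ← Submodule.Quotient.mk_smul, smul_eq_mul, mul_one,
          (Submodule.Quotient.mk_eq_zero T).2 ht, map_zero]
      have hzero : p0 = 0 := by
        have hα : ∀ i : Fin n, α i p0 = 0 := by
          intro i
          refine hR (α i p0) fun f p => ?_
          have h1 : f p • p0 = 0 := hTp0 _ (hSsub ⟨f, p, rfl⟩)
          calc f p * α i p0 = α i (f p • p0) := by rw [map_smul, smul_eq_mul]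
            _ = 0 := by rw [h1, map_zero]
        rw [← hdb p0]
        exact Finset.sum_eq_zero fun i _ => by rw [hα i, zero_smul]
      show χ x = 0
      obtain ⟨b, rfl⟩ := Submodule.mkQ_surjective T x
      have : (T.mkQ) b = b • Submodule.Quotient.mk 1 := by
        rw [← Submodule.Quotient.mk_smul, smul_eq_mul, mul_one]; rfl
      rw [this, map_smul, ← hp0, hzero, smul_zero]
    -- the B-linear projection onto P
    set φ : Module.End (Module.End A M) M :=
      { toFun := fun m => (m.1, 0)
        map_add' := fun m m' => by
          show ((m + m').1, (0 : A ⧸ T)) = (m.1, 0) + (m'.1, 0)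
          exact Prod.ext rfl (zero_add 0).symm
        map_smul' := fun g m => by
          show ((g m).1, (0 : A ⧸ T)) = g (m.1, 0)
          have h1 : g m = g (m.1, 0) + g (0, m.2) := by
            rw [← map_add, Prod.mk_add_mk, add_zero, zero_add]
          refine Prod.ext ?_ (hg21 g m.1).symm
          rw [h1, Prod.fst_add, hg12 g m.2, add_zero] } with hφ
    obtain ⟨a, ha⟩ := (hqf1 M inferInstance hMfaith).2 φ
    have hm : ∀ m : M, a • m = (m.1, 0) := fun m => DFunLike.congr_fun ha m
    have ha1 : a = 1 := by
      have h0 : ∀ p : P, (a - 1) • p = 0 := by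
        intro p
        have := hm (p, 0)
        rw [Prod.smul_mk, Prod.mk.injEq] at this
        rw [sub_smul, one_smul, this.1, sub_self]
      exact sub_eq_zero.1 (hfaithful (a - 1) h0)
    have honeT : (1 : A) ∈ T := by
      have := hm (0, Submodule.Quotient.mk 1)
      rw [Prod.smul_mk, Prod.mk.injEq] at this
      have h2 := this.2
      rw [← Submodule.Quotient.mk_smul, smul_eq_mul, mul_one] at h2
      rw [← ha1]
      exact (Submodule.Quotient.mk_eq_zero T).1 h2
    -- extract a finite sum representation of 1
    rw [hT] at honeT
    obtain ⟨c, hc, hsum⟩ := Submodule.mem_span_set.1 honeT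
    have hxS : ∀ x : ↥c.support, ∃ (f : P →ₗ[A] A) (p : P), f p = (x : A) := fun x => hc x.2
    choose F Q hFQ using hxS
    refine aux_selfinj hinj (↥c.support) F (fun x => c x • Q x) ?_
    have : ∀ x : ↥c.support, F x (c x • Q x) = c x • (x : A) := fun x => by
      rw [map_smul, hFQ x]
    rw [Finset.sum_congr rfl fun x _ => this x]
    rw [← hsum, Finsupp.sum]
    exact Finset.sum_coe_sort c.support fun x => c x • x
end

section
/- Let k be a field, A a finite-dimensional k-algebra, and P a projective-injective finitely generated left A-module such that Hom_A(P, A), with right A-action by postmultiplication, is a faithful right A-module. Then DP = Hom_k(P, k) is a direct summand of a finite direct sum of copies of Hom_A(P, A) as a right A-module, i.e. DP ∈ add Hom_A(P, A). -/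
universe u

open MulOpposite

set_option synthInstance.maxHeartbeats 400000
set_option maxHeartbeats 1000000

section RightDual
variable (k A P : Type u) [Field k] [Ring A] [Algebra k A]
  [AddCommGroup P] [Module A P] [Module k P] [IsScalarTower k A P]

/-- Scalar multiplication by `a : A` on `P`, as a `k`-linear map. -/
noncomputable def smulKLinear (a : A) : P →ₗ[k] P where
  toFun p := a • p
  map_add' := smul_add a
  map_smul' c p := by
    show a • c • p = c • a • p
    rw [← algebraMap_smul A c p, ← algebraMap_smul A c (a • p), smul_smul, smul_smul,
      Algebra.commutes]

/-- The right `A`-action `(φ · a) p = φ (a • p)` on `D(P) = Hom_k(P, k)`, as a ring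
homomorphism `Aᵐᵒᵖ → End_k(D(P))`. -/
noncomputable def dualRingHom : Aᵐᵒᵖ →+* Module.End k (Module.Dual k P) where
  toFun x := (smulKLinear k A P x.unop).dualMap
  map_one' := by ext φ p; simp [smulKLinear]
  map_mul' x y := by ext φ p; simp [smulKLinear, mul_smul]
  map_zero' := by ext φ p; simp [smulKLinear]
  map_add' x y := by ext φ p; simp [smulKLinear, add_smul]

/-- `D(P)` as a right `A`-module, i.e. as a module over `Aᵐᵒᵖ`. -/
noncomputable instance : Module Aᵐᵒᵖ (Module.Dual k P) :=
  Module.compHom _ (dualRingHom k A P)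
end RightDual

section Aux
variable (k A P : Type u) [Field k] [Ring A] [Algebra k A]
  [AddCommGroup P] [Module A P] [Module k P] [IsScalarTower k A P]

lemma dsmul (a : A) (φ : Module.Dual k P) (p : P) : (op a • φ) p = φ (a • p) := rfl

lemma dsmul' (z : Aᵐᵒᵖ) (φ : Module.Dual k P) (p : P) : (z • φ) p = φ (z.unop • p) := rfl

lemma dalg (c : k) (φ : Module.Dual k P) : op (algebraMap k A c) • φ = c • φ := by
  ext p; rw [dsmul, algebraMap_smul, map_smul, LinearMap.smul_apply]

lemma hsmulH (a : A) (f : P →ₗ[A] A) (p : P) : (op a • f) p = f p * a := by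
  rw [LinearMap.smul_apply, op_smul_eq_mul]

lemma halgH (c : k) (f : P →ₗ[A] A) : op (algebraMap k A c) • f = c • f := by
  ext p
  rw [hsmulH, LinearMap.smul_apply, Algebra.smul_def, Algebra.commutes]

/-- The left `A`-action `(a • ψ) b = ψ (b * a)` on `D(A) = Hom_k(A, k)`, as a ring
homomorphism `A → End_k(D(A))`. -/
noncomputable def leftDualRingHom : A →+* Module.End k (Module.Dual k A) where
  toFun a := (LinearMap.mulRight k a).dualMap
  map_one' := by ext ψ b; simp
  map_mul' x y := by ext ψ b; simp [mul_assoc]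
  map_zero' := by ext ψ b; simp
  map_add' x y := by ext ψ b; simp [mul_add]

/-- `D(A)` as a left `A`-module. -/
noncomputable def leftDualModule : Module A (Module.Dual k A) :=
  Module.compHom _ (leftDualRingHom k A)

lemma lsmul (a : A) (ψ : Module.Dual k A) (b : A) :
    letI := leftDualModule k A
    (a • ψ) b = ψ (b * a) := rfl

noncomputable def leftDualTower :
    letI := leftDualModule k A
    IsScalarTower k A (Module.Dual k A) := by
  letI := leftDualModule k A
  refine ⟨fun c a ψ => ?_⟩
  ext b
  rw [lsmul]
  show ψ (b * c • a) = c • ((a • ψ) b)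
  rw [mul_smul_comm, lsmul, map_smul]

end Aux

/-- If `P` is a projective-injective finitely generated left module over a
finite-dimensional `k`-algebra `A` such that `Hom_A(P, A)` (with right `A`-action by
postmultiplication) is a faithful right `A`-module, then `DP = Hom_k(P, k)` is a direct
summand of a finite direct sum of copies of `Hom_A(P, A)` as a right `A`-module,
i.e. `DP ∈ add Hom_A(P, A)`. -/
theorem dual_memAdd_hom
    (k A P : Type u) [Field k] [Ring A] [Algebra k A] [FiniteDimensional k A]
    [AddCommGroup P] [Module A P] [Module k P] [IsScalarTower k A P] [Module.Finite A P]
    (hproj : Module.Projective A P) (hinj : Module.Injective A P)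
    (hfaithful : ∀ a : A, (∀ (f : P →ₗ[A] A) (p : P), f p * a = 0) → a = 0) :
    MemAdd Aᵐᵒᵖ (P →ₗ[A] A) (Module.Dual k P) := by
  classical
  letI := hproj
  haveI : Module.Finite k P := Module.Finite.trans A P
  letI instL := leftDualModule k A
  letI instT := leftDualTower k A
  -- projectivity: a split surjection from a finite free module
  obtain ⟨n, π, hπ⟩ := Module.Finite.exists_fin' A P
  obtain ⟨s, hs⟩ := Module.projective_lifting_property π LinearMap.id hπ
  have hs' : ∀ p, π (s p) = p := fun p => by
    have := LinearMap.congr_fun hs p; simpa using this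
  -- a finite basis of the dual of P
  set r := Module.finrank k (Module.Dual k P) with hr
  let φb : Module.Basis (Fin r) k (Module.Dual k P) := Module.finBasis k (Module.Dual k P)
  -- the embedding of P into a finite power of D(A)
  let u : P →ₗ[A] (Fin r → Module.Dual k A) :=
    { toFun := fun p i => (φb i).comp ((LinearMap.toSpanSingleton A P p).restrictScalars k)
      map_add' := by
        intro p q; funext i; ext b
        simp [LinearMap.toSpanSingleton_apply, smul_add]
      map_smul' := by
        intro a p; funext i; ext b
        rw [RingHom.id_apply, Pi.smul_apply, lsmul]
        simp only [LinearMap.coe_comp, LinearMap.coe_restrictScalars, Function.comp_apply,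
          LinearMap.toSpanSingleton_apply]
        rw [mul_smul] }
  have hu : ∀ p i b, u p i b = (φb i) (b • p) := fun p i b => rfl
  have uinj : Function.Injective u := by
    rw [← LinearMap.ker_eq_bot, LinearMap.ker_eq_bot']
    intro p hp
    have h1 : ∀ φ : Module.Dual k P, φ p = 0 := by
      intro φ
      have h2 : ∀ i, (φb i) p = 0 := by
        intro i
        have := congrFun hp i
        have := LinearMap.congr_fun this (1 : A)
        rw [hu, one_smul] at this
        simpa using this
      rw [← φb.sum_repr φ]
      simp only [LinearMap.sum_apply, LinearMap.smul_apply, h2, smul_zero,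
        Finset.sum_const_zero]
    exact (Module.forall_dual_apply_eq_zero_iff k p).mp h1
  -- injectivity of P: a retraction of u
  obtain ⟨v, hv⟩ := hinj.out u uinj LinearMap.id
  -- the map σ : D(P) → A^r
  let ξ : Module.Dual k P → Fin r → Module.Dual k (Module.Dual k A) := fun φ i =>
    φ.comp ((v.restrictScalars k).comp (LinearMap.single k (fun _ : Fin r => Module.Dual k A) i))
  have hξ : ∀ φ i ψ, ξ φ i ψ = φ (v (Pi.single i ψ)) := fun _ _ _ => rfl
  have hξadd : ∀ φ₁ φ₂ i, ξ (φ₁ + φ₂) i = ξ φ₁ i + ξ φ₂ i := by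
    intro φ₁ φ₂ i; ext ψ; simp [hξ]
  let σ : Module.Dual k P →ₗ[Aᵐᵒᵖ] (Fin r → A) :=
    { toFun := fun φ i => (Module.evalEquiv k A).symm (ξ φ i)
      map_add' := by
        intro φ₁ φ₂; funext i
        show (Module.evalEquiv k A).symm (ξ (φ₁ + φ₂) i) = _
        rw [hξadd, map_add]; rfl
      map_smul' := by
        intro z φ; funext i
        rw [RingHom.id_apply, Pi.smul_apply, smul_eq_mul_unop,
          LinearEquiv.symm_apply_eq]
        ext ψ
        rw [Module.evalEquiv_apply]
        show ξ (z • φ) i ψ = ψ ((Module.evalEquiv k A).symm (ξ φ i) * z.unop)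
        rw [hξ, dsmul', ← map_smul v, ← Pi.single_smul, ← hξ φ i]
        rw [← lsmul k A z.unop ψ, Module.apply_evalEquiv_symm_apply] }
  have hσ : ∀ φ i, σ φ i = (Module.evalEquiv k A).symm (ξ φ i) := fun _ _ => rfl
  have σinj : Function.Injective σ := by
    rw [← LinearMap.ker_eq_bot, LinearMap.ker_eq_bot']
    intro φ hφ
    have h1 : ∀ i ψ, φ (v (Pi.single i ψ)) = 0 := by
      intro i ψ
      have h2 : σ φ i = 0 := congrFun hφ i
      have h3 := Module.apply_evalEquiv_symm_apply k A ψ (ξ φ i)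
      rw [← hσ, h2, map_zero] at h3
      rw [← hξ, ← h3]
    have h4 : ∀ x : Fin r → Module.Dual k A, φ (v x) = 0 := by
      intro x
      rw [← Finset.univ_sum_single x, map_sum, map_sum]
      exact Finset.sum_eq_zero fun i _ => h1 i (x i)
    ext p
    have := h4 (u p)
    rw [hv] at this
    simpa using this
  -- a finite basis of Hom_A(P, A)
  haveI finH : FiniteDimensional k (P →ₗ[A] A) := by
    let res : (P →ₗ[A] A) →ₗ[k] (P →ₗ[k] A) :=
      { toFun := fun f => f.restrictScalars k
        map_add' := fun f g => rfl
        map_smul' := fun c f => rfl }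
    exact FiniteDimensional.of_injective res
      (fun f g h => LinearMap.restrictScalars_injective k h)
  set m := Module.finrank k (P →ₗ[A] A) with hm
  let bas : Module.Basis (Fin m) k (P →ₗ[A] A) := Module.finBasis k (P →ₗ[A] A)
  have hsp : ∀ a : A, (∀ i, op a • bas i = 0) → a = 0 := by
    intro a ha
    have hall : ∀ f : P →ₗ[A] A, op a • f = 0 := by
      intro f
      let T : (P →ₗ[A] A) →ₗ[k] (P →ₗ[A] A) :=
        { toFun := fun g => op a • g
          map_add' := fun g₁ g₂ => smul_add _ _ _
          map_smul' := by
            intro c g; ext p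
            rw [RingHom.id_apply, hsmulH, LinearMap.smul_apply, LinearMap.smul_apply,
              hsmulH, smul_mul_assoc] }
      have hT : T = 0 := by
        apply bas.ext
        intro i
        simpa [T] using ha i
      have := LinearMap.congr_fun hT f
      simpa [T] using this
    apply hfaithful a
    intro f p
    rw [← hsmulH, hall f]; rfl
  -- the embedding of A^r into Hom(P,A)^(r*m)
  let J : (Fin r → A) →ₗ[Aᵐᵒᵖ] (Fin (r * m) → (P →ₗ[A] A)) :=
    { toFun := fun x t =>
        op (x (finProdFinEquiv.symm t).1) • bas (finProdFinEquiv.symm t).2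
      map_add' := by
        intro x y; funext t
        simp [add_smul]
      map_smul' := by
        intro z x; funext t
        show op ((z • x) (finProdFinEquiv.symm t).1) • bas (finProdFinEquiv.symm t).2
          = z • (op (x (finProdFinEquiv.symm t).1) • bas (finProdFinEquiv.symm t).2)
        rw [Pi.smul_apply, smul_eq_mul_unop, op_mul, op_unop, mul_smul] }
  have Jinj : Function.Injective J := by
    rw [← LinearMap.ker_eq_bot, LinearMap.ker_eq_bot']
    intro x hx
    funext i
    apply hsp
    intro l
    have h3 := congrFun hx (finProdFinEquiv (i, l))
    simp only [J, LinearMap.coe_mk, AddHom.coe_mk, Equiv.symm_apply_apply,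
      Pi.zero_apply] at h3
    exact h3
  -- the embedding F : D(P) → Hom(P,A)^(r*m)
  let F : Module.Dual k P →ₗ[Aᵐᵒᵖ] (Fin (r * m) → (P →ₗ[A] A)) := J ∘ₗ σ
  have Finj : Function.Injective F := by
    rw [show F = J ∘ₗ σ from rfl, LinearMap.coe_comp]
    exact Jinj.comp σinj
  -- pass to a k-linear retraction
  have halgY : ∀ (c : k) (y : Fin (r * m) → (P →ₗ[A] A)),
      op (algebraMap k A c) • y = c • y := by
    intro c y; funext t
    rw [Pi.smul_apply, Pi.smul_apply, halgH]
  let Fk : Module.Dual k P →ₗ[k] (Fin (r * m) → (P →ₗ[A] A)) :=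
    { toFun := F
      map_add' := F.map_add
      map_smul' := fun c φ => by
        show F (c • φ) = (RingHom.id k) c • F φ
        rw [RingHom.id_apply, ← dalg k A P c φ, map_smul, halgY] }
  obtain ⟨G, hG⟩ := Fk.exists_leftInverse_of_injective (LinearMap.ker_eq_bot.mpr Finj)
  have hG' : ∀ φ, G (F φ) = φ := fun φ => LinearMap.congr_fun hG φ
  -- auxiliary smul facts
  have hs2 : ∀ (c : k) (p : P) (i : Fin n), s (c • p) i = c • s p i := by
    intro c p i
    rw [← algebraMap_smul A c p, map_smul, Pi.smul_apply, algebraMap_smul]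
  have hY3 : ∀ (c : k) (z : Aᵐᵒᵖ) (y : Fin (r * m) → (P →ₗ[A] A)),
      (c • z) • y = c • (z • y) := by
    intro c z y
    funext t; ext p
    show (y t) p * (c • z.unop) = c • ((y t) p * z.unop)
    rw [mul_smul_comm]
  -- the retraction ρ
  let ρ : (Fin (r * m) → (P →ₗ[A] A)) →ₗ[Aᵐᵒᵖ] Module.Dual k P :=
    { toFun := fun y =>
        { toFun := fun p => ∑ i, G (op (s p i) • y) (π (Pi.single i 1))
          map_add' := by
            intro p q
            rw [← Finset.sum_add_distrib]
            refine Finset.sum_congr rfl fun i _ => ?_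
            rw [map_add s, Pi.add_apply, op_add, add_smul, map_add, LinearMap.add_apply]
          map_smul' := by
            intro c p
            show (∑ i, G (op (s (c • p) i) • y) (π (Pi.single i 1)))
              = (RingHom.id k) c • (∑ i, G (op (s p i) • y) (π (Pi.single i 1)))
            rw [RingHom.id_apply, Finset.smul_sum]
            refine Finset.sum_congr rfl fun i _ => ?_
            rw [hs2, op_smul, hY3, G.map_smul, LinearMap.smul_apply] }
      map_add' := by
        intro y z; ext p
        show (∑ i, G (op (s p i) • (y + z)) (π (Pi.single i 1)))
          = (∑ i, G (op (s p i) • y) (π (Pi.single i 1)))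
            + (∑ i, G (op (s p i) • z) (π (Pi.single i 1)))
        rw [← Finset.sum_add_distrib]
        refine Finset.sum_congr rfl fun i _ => ?_
        rw [smul_add, map_add, LinearMap.add_apply]
      map_smul' := by
        intro z y; ext p
        rw [RingHom.id_apply]
        show (∑ i, G (op (s p i) • (z • y)) (π (Pi.single i 1)))
          = (∑ i, G (op (s (z.unop • p) i) • y) (π (Pi.single i 1)))
        refine Finset.sum_congr rfl fun i _ => ?_
        rw [map_smul s, Pi.smul_apply, smul_eq_mul, op_mul, op_unop, ← mul_smul] }
  refine ⟨r * m, F, ρ, ?_⟩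
  apply LinearMap.ext; intro φ
  apply LinearMap.ext; intro p
  show (∑ i, G (op (s p i) • F φ) (π (Pi.single i 1))) = φ p
  have step1 : ∀ i : Fin n, G (op (s p i) • F φ) (π (Pi.single i 1))
      = φ (π (Pi.single i (s p i))) := by
    intro i
    rw [← F.map_smul, hG', dsmul, ← map_smul π, ← Pi.single_smul, smul_eq_mul, mul_one]
  rw [Finset.sum_congr rfl fun i _ => step1 i, ← map_sum φ, ← map_sum π,
    Finset.univ_sum_single, hs']
end
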